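/- Let V, W ⊆ R^D be subspaces with dim V = d and dim W = D − d, such that the minimal principal angle θ between V and W is positive (so V ⊕ W = R^D). Let z₀ ∈ R^D, and let P denote the affine oblique projection onto z₀ + V with kernel W: P(z) = U_V U_V^T (E E^T)^† (z − z₀) + z₀, where U_V, U_W are matrices with orthonormal columns spanning V and W respectively, and E = [U_V, U_W]. Then for every z in a ball around z₀ such that the direction z − z₀ makes angle φ with V satisfying 0 ≤ φ ≤ π/2, the projection satisfies (cos φ − sin φ/tan θ)·‖z − z₀‖ ≤ ‖P(z) − z₀‖ ≤ (cos φ + sin φ/tan θ)·‖z − z₀‖. -/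

import Mathlib

open Matrix RealInnerProductSpace

private noncomputable def toE {n : ℕ} (a : Fin n → ℝ) : EuclideanSpace ℝ (Fin n) :=
  (WithLp.equiv 2 (Fin n → ℝ)).symm a

private lemma toE_dot {n : ℕ} (a b : Fin n → ℝ) : a ⬝ᵥ b = ⟪toE a, toE b⟫ := by
  rw [toE, toE, EuclideanSpace.inner_eq_star_dotProduct]
  simp [dotProduct, mul_comm]

private lemma toE_self {n : ℕ} (a : Fin n → ℝ) : a ⬝ᵥ a = ‖toE a‖ ^ 2 := by
  rw [toE_dot, real_inner_self_eq_norm_sq]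

private lemma toE_sqrt {n : ℕ} (a : Fin n → ℝ) : Real.sqrt (a ⬝ᵥ a) = ‖toE a‖ := by
  rw [toE_self, Real.sqrt_sq (norm_nonneg _)]

private lemma toE_sub {n : ℕ} (a b : Fin n → ℝ) : toE (a - b) = toE a - toE b := rfl

private lemma toE_eq_zero {n : ℕ} {a : Fin n → ℝ} (h : toE a = 0) : a = 0 := by
  have := congrArg (WithLp.equiv 2 (Fin n → ℝ)) h
  simpa [toE] using this

private lemma mulVec_dot {m n : ℕ} (A : Matrix (Fin m) (Fin n) ℝ) (a : Fin n → ℝ)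
    (y : Fin m → ℝ) : (A *ᵥ a) ⬝ᵥ y = a ⬝ᵥ (Aᵀ *ᵥ y) := by
  rw [dotProduct_comm, dotProduct_mulVec, ← mulVec_transpose, dotProduct_comm]

set_option maxHeartbeats 1000000 in
/-- For the affine oblique projection `P` onto `z₀ + V` with kernel `W`, where the minimal
principal angle between `V` and `W` is `θ > 0`, any point `z` whose direction from `z₀` makes
angle `φ` with `V` satisfies
`(cos φ − sin φ/tan θ)‖z − z₀‖ ≤ ‖P(z) − z₀‖ ≤ (cos φ + sin φ/tan θ)‖z − z₀‖`. -/
theorem stmt8 {D d e : ℕ}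
    (UV : Matrix (Fin D) (Fin d) ℝ) (UW : Matrix (Fin D) (Fin e) ℝ)
    (hUV : UVᵀ * UV = 1) (hUW : UWᵀ * UW = 1)
    (hdim : d + e = D)
    (θ : ℝ) (hθ : 0 < θ ∧ θ ≤ Real.pi / 2)
    -- `cos θ = ‖U_W U_Wᵀ U_V‖`: the maximal inner product of unit vectors of `V` and `W`
    (hcos : IsGreatest {c : ℝ | ∃ (a : Fin d → ℝ) (b : Fin e → ℝ),
      Real.sqrt (a ⬝ᵥ a) = 1 ∧ Real.sqrt (b ⬝ᵥ b) = 1 ∧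
      c = (UV *ᵥ a) ⬝ᵥ (UW *ᵥ b)} (Real.cos θ))
    (z₀ : Fin D → ℝ)
    (E : Matrix (Fin D) (Fin d ⊕ Fin e) ℝ) (hE : E = Matrix.fromCols UV UW)
    (hEinv : IsUnit (E * Eᵀ))
    (φ : ℝ) (hφ : 0 ≤ φ ∧ φ ≤ Real.pi / 2) :
    ∀ zz : Fin D → ℝ,
      -- the direction `zz − z₀` makes angle `φ` with `V`
      Real.sqrt ((UV *ᵥ (UVᵀ *ᵥ (zz - z₀))) ⬝ᵥ (UV *ᵥ (UVᵀ *ᵥ (zz - z₀))))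
          = Real.cos φ * Real.sqrt ((zz - z₀) ⬝ᵥ (zz - z₀)) →
      (Real.cos φ - Real.sin φ / Real.tan θ) * Real.sqrt ((zz - z₀) ⬝ᵥ (zz - z₀))
          ≤ Real.sqrt (((UV * UVᵀ * (E * Eᵀ)⁻¹) *ᵥ (zz - z₀)) ⬝ᵥ
              ((UV * UVᵀ * (E * Eᵀ)⁻¹) *ᵥ (zz - z₀))) ∧
      Real.sqrt (((UV * UVᵀ * (E * Eᵀ)⁻¹) *ᵥ (zz - z₀)) ⬝ᵥ
              ((UV * UVᵀ * (E * Eᵀ)⁻¹) *ᵥ (zz - z₀)))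
          ≤ (Real.cos φ + Real.sin φ / Real.tan θ) * Real.sqrt ((zz - z₀) ⬝ᵥ (zz - z₀)) := by
  intro zz hangle
  set x : Fin D → ℝ := zz - z₀ with hxdef
  obtain ⟨hθ0, hθ2⟩ := hθ
  have hpi : (0:ℝ) < Real.pi := Real.pi_pos
  have hsinθ : 0 < Real.sin θ := Real.sin_pos_of_pos_of_lt_pi hθ0 (by linarith)
  have hcosθ0 : 0 ≤ Real.cos θ := Real.cos_nonneg_of_mem_Icc ⟨by linarith, hθ2⟩
  have hsinφ : 0 ≤ Real.sin φ := Real.sin_nonneg_of_nonneg_of_le_pi hφ.1 (by linarith)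
  have hcosφ : 0 ≤ Real.cos φ := Real.cos_nonneg_of_mem_Icc ⟨by linarith, hφ.2⟩
  -- matrix identities
  set T : Matrix (Fin D) (Fin D) ℝ := (E * Eᵀ)⁻¹ with hTdef
  have hEE : E * Eᵀ = UV * UVᵀ + UW * UWᵀ := by
    rw [hE, transpose_fromCols, fromCols_mul_fromRows]
  have hT : (UV * UVᵀ) * T + (UW * UWᵀ) * T = 1 := by
    rw [← add_mul, ← hEE, hTdef]
    exact Matrix.mul_nonsing_inv _ ((Matrix.isUnit_iff_isUnit_det _).mp hEinv)
  set v : Fin D → ℝ := (UV * UVᵀ * T) *ᵥ x with hvdef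
  set b₀ : Fin e → ℝ := UWᵀ *ᵥ (T *ᵥ x) with hb₀def
  set w : Fin D → ℝ := UW *ᵥ b₀ with hwdef
  have hxvw : x = v + w := by
    calc x = (1 : Matrix (Fin D) (Fin D) ℝ) *ᵥ x := (one_mulVec x).symm
      _ = ((UV * UVᵀ) * T) *ᵥ x + ((UW * UWᵀ) * T) *ᵥ x := by rw [← hT, add_mulVec]
      _ = v + w := by
          rw [hvdef, hwdef, hb₀def, mulVec_mulVec, mulVec_mulVec, Matrix.mul_assoc]
  set a₀ : Fin d → ℝ := UVᵀ *ᵥ (T *ᵥ x) with ha₀def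
  have hva : v = UV *ᵥ a₀ := by
    rw [hvdef, ha₀def, mulVec_mulVec, mulVec_mulVec, Matrix.mul_assoc]
  -- isometry facts
  have isoV : ∀ a : Fin d → ℝ, (UV *ᵥ a) ⬝ᵥ (UV *ᵥ a) = a ⬝ᵥ a := fun a => by
    rw [mulVec_dot, mulVec_mulVec, hUV, one_mulVec]
  have isoW : ∀ b : Fin e → ℝ, (UW *ᵥ b) ⬝ᵥ (UW *ᵥ b) = b ⬝ᵥ b := fun b => by
    rw [mulVec_dot, mulVec_mulVec, hUW, one_mulVec]
  set p : Fin D → ℝ := UV *ᵥ (UVᵀ *ᵥ x) with hpdef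
  set r : Fin D → ℝ := UV *ᵥ (UVᵀ *ᵥ w) with hrdef
  have hUVv : UVᵀ *ᵥ v = a₀ := by rw [hva, mulVec_mulVec, hUV, one_mulVec]
  have hpvr : p = v + r := by
    rw [hpdef, hrdef, hxvw, mulVec_add, mulVec_add, hUVv, ← hva]
  set q : Fin D → ℝ := x - p with hqdef
  have hqwr : q = w - r := by
    rw [hqdef, hpvr, hxvw]; abel
  -- dot product identities
  have hpx : p ⬝ᵥ x = p ⬝ᵥ p := by
    rw [hpdef, mulVec_dot, isoV]
  have hxp : x ⬝ᵥ p = p ⬝ᵥ p := by rw [dotProduct_comm]; exact hpx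
  have hq2 : q ⬝ᵥ q = x ⬝ᵥ x - p ⬝ᵥ p := by
    simp only [hqdef, sub_dotProduct, dotProduct_sub]
    rw [hpx, hxp]; ring
  have hrw : r ⬝ᵥ w = r ⬝ᵥ r := by
    rw [hrdef, mulVec_dot, isoV]
  have hwr : w ⬝ᵥ r = r ⬝ᵥ r := by rw [dotProduct_comm]; exact hrw
  have hq2' : q ⬝ᵥ q = w ⬝ᵥ w - r ⬝ᵥ r := by
    simp only [hqwr, sub_dotProduct, dotProduct_sub]
    rw [hrw, hwr]; ring
  -- the principal-angle bound: ‖UVᵀ (UW b)‖ ≤ cos θ ‖b‖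
  have key : ∀ b : Fin e → ℝ,
      Real.sqrt ((UVᵀ *ᵥ (UW *ᵥ b)) ⬝ᵥ (UVᵀ *ᵥ (UW *ᵥ b)))
        ≤ Real.cos θ * Real.sqrt (b ⬝ᵥ b) := by
    intro b
    set a : Fin d → ℝ := UVᵀ *ᵥ (UW *ᵥ b) with hadef
    have h1 : (UV *ᵥ a) ⬝ᵥ (UW *ᵥ b) = a ⬝ᵥ a := by
      rw [mulVec_dot, ← hadef, dotProduct_comm]
    set na : ℝ := Real.sqrt (a ⬝ᵥ a) with hnadef
    set nb : ℝ := Real.sqrt (b ⬝ᵥ b) with hnbdef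
    have hna0 : 0 ≤ na := Real.sqrt_nonneg _
    have hnb0 : 0 ≤ nb := Real.sqrt_nonneg _
    have haa : a ⬝ᵥ a = na ^ 2 := by
      rw [hnadef, Real.sq_sqrt]; rw [toE_self]; positivity
    have hbb : b ⬝ᵥ b = nb ^ 2 := by
      rw [hnbdef, Real.sq_sqrt]; rw [toE_self]; positivity
    rcases eq_or_lt_of_le hna0 with hna | hna
    · rw [← hna]; positivity
    rcases eq_or_lt_of_le hnb0 with hnb | hnb
    · exfalso
      have hb0 : b = 0 := by
        apply toE_eq_zero
        apply norm_eq_zero.mp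
        have h3 : b ⬝ᵥ b = 0 := by rw [hbb, ← hnb]; ring
        have h4 : ‖toE b‖ ^ 2 = 0 := by rw [← toE_self]; exact h3
        exact pow_eq_zero_iff (two_ne_zero) |>.mp h4
      have ha0 : a = 0 := by rw [hadef, hb0, mulVec_zero, mulVec_zero]
      rw [ha0] at haa
      simp at haa
      nlinarith
    · have hmem : (UV *ᵥ (na⁻¹ • a)) ⬝ᵥ (UW *ᵥ (nb⁻¹ • b)) ≤ Real.cos θ := by
        apply hcos.2
        refine ⟨na⁻¹ • a, nb⁻¹ • b, ?_, ?_, rfl⟩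
        · have h5 : (na⁻¹ • a) ⬝ᵥ (na⁻¹ • a) = (na⁻¹ * na) ^ 2 := by
            rw [smul_dotProduct, dotProduct_smul, smul_eq_mul, smul_eq_mul, haa]; ring
          rw [h5, inv_mul_cancel₀ (ne_of_gt hna), one_pow, Real.sqrt_one]
        · have h5 : (nb⁻¹ • b) ⬝ᵥ (nb⁻¹ • b) = (nb⁻¹ * nb) ^ 2 := by
            rw [smul_dotProduct, dotProduct_smul, smul_eq_mul, smul_eq_mul, hbb]; ring
          rw [h5, inv_mul_cancel₀ (ne_of_gt hnb), one_pow, Real.sqrt_one]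
      rw [mulVec_smul, mulVec_smul, smul_dotProduct, dotProduct_smul, smul_eq_mul,
        smul_eq_mul, h1, haa] at hmem
      have h2 : na / nb ≤ Real.cos θ := by
        have heq : na / nb = na⁻¹ * (nb⁻¹ * na ^ 2) := by
          field_simp [ne_of_gt hna, ne_of_gt hnb]
        rw [heq]; exact hmem
      exact (div_le_iff₀ hnb).mp h2
  -- norms
  have hNp : ‖toE p‖ = Real.cos φ * ‖toE x‖ := by
    rw [← toE_sqrt, ← toE_sqrt]; exact hangle
  have hNq : ‖toE q‖ = Real.sin φ * ‖toE x‖ := by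
    have h1 : ‖toE q‖ ^ 2 = (Real.sin φ * ‖toE x‖) ^ 2 := by
      have h0 := hq2
      rw [toE_self, toE_self, toE_self] at h0
      rw [h0, hNp]
      nlinarith [Real.sin_sq_add_cos_sq φ]
    rw [← Real.sqrt_sq (norm_nonneg (toE q)), h1, Real.sqrt_sq (by positivity)]
  have hNr : ‖toE r‖ ≤ Real.cos θ * ‖toE w‖ := by
    have h1 : r ⬝ᵥ r = (UVᵀ *ᵥ w) ⬝ᵥ (UVᵀ *ᵥ w) := by rw [hrdef, isoV]
    have h2 : w ⬝ᵥ w = b₀ ⬝ᵥ b₀ := by rw [hwdef, isoW]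
    calc ‖toE r‖ = Real.sqrt (r ⬝ᵥ r) := (toE_sqrt r).symm
      _ = Real.sqrt ((UVᵀ *ᵥ w) ⬝ᵥ (UVᵀ *ᵥ w)) := by rw [h1]
      _ ≤ Real.cos θ * Real.sqrt (b₀ ⬝ᵥ b₀) := by rw [hwdef]; exact key b₀
      _ = Real.cos θ * Real.sqrt (w ⬝ᵥ w) := by rw [h2]
      _ = Real.cos θ * ‖toE w‖ := by rw [toE_sqrt]
  have hNw : Real.sin θ * ‖toE w‖ ≤ ‖toE q‖ := by
    have h1 : ‖toE q‖ ^ 2 = ‖toE w‖ ^ 2 - ‖toE r‖ ^ 2 := by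
      have h0 := hq2'
      rw [toE_self, toE_self, toE_self] at h0
      exact h0
    have h3 : ‖toE r‖ ^ 2 ≤ Real.cos θ ^ 2 * ‖toE w‖ ^ 2 := by
      nlinarith [norm_nonneg (toE r), norm_nonneg (toE w)]
    have h4 : (Real.sin θ * ‖toE w‖) ^ 2 ≤ ‖toE q‖ ^ 2 := by
      nlinarith [Real.sin_sq_add_cos_sq θ]
    calc Real.sin θ * ‖toE w‖ = Real.sqrt ((Real.sin θ * ‖toE w‖) ^ 2) :=
          (Real.sqrt_sq (by positivity)).symm
      _ ≤ Real.sqrt (‖toE q‖ ^ 2) := Real.sqrt_le_sqrt h4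
      _ = ‖toE q‖ := Real.sqrt_sq (norm_nonneg _)
  have hwub : ‖toE w‖ ≤ Real.sin φ * ‖toE x‖ / Real.sin θ := by
    rw [le_div_iff₀ hsinθ]
    calc ‖toE w‖ * Real.sin θ = Real.sin θ * ‖toE w‖ := mul_comm _ _
      _ ≤ ‖toE q‖ := hNw
      _ = Real.sin φ * ‖toE x‖ := hNq
  have hK : ‖toE r‖ ≤ Real.sin φ * Real.cos θ / Real.sin θ * ‖toE x‖ := by
    calc ‖toE r‖ ≤ Real.cos θ * ‖toE w‖ := hNr
      _ ≤ Real.cos θ * (Real.sin φ * ‖toE x‖ / Real.sin θ) :=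
          mul_le_mul_of_nonneg_left hwub hcosθ0
      _ = Real.sin φ * Real.cos θ / Real.sin θ * ‖toE x‖ := by ring
  have htan : Real.sin φ / Real.tan θ = Real.sin φ * Real.cos θ / Real.sin θ := by
    rw [Real.tan_eq_sin_div_cos, div_div_eq_mul_div]
  have hv_eq : v = p - r := eq_sub_of_add_eq hpvr.symm
  have hvpr : ‖toE v‖ = ‖toE p - toE r‖ := by rw [← toE_sub, ← hv_eq]
  constructor
  · rw [toE_sqrt, toE_sqrt, htan]
    calc (Real.cos φ - Real.sin φ * Real.cos θ / Real.sin θ) * ‖toE x‖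
        = Real.cos φ * ‖toE x‖ - Real.sin φ * Real.cos θ / Real.sin θ * ‖toE x‖ := by ring
      _ ≤ ‖toE p‖ - ‖toE r‖ := by rw [hNp]; linarith
      _ ≤ ‖toE p - toE r‖ := norm_sub_norm_le _ _
      _ = ‖toE v‖ := hvpr.symm
  · rw [toE_sqrt, toE_sqrt, htan]
    calc ‖toE v‖ = ‖toE p - toE r‖ := hvpr
      _ ≤ ‖toE p‖ + ‖toE r‖ := norm_sub_le _ _
      _ ≤ Real.cos φ * ‖toE x‖ + Real.sin φ * Real.cos θ / Real.sin θ * ‖toE x‖ := by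
          rw [hNp]; linarith
      _ = (Real.cos φ + Real.sin φ * Real.cos θ / Real.sin θ) * ‖toE x‖ := by ring
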